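/- Define sequences h, t, p : ℕ → ℝ by: h_ℓ = (1/2)^{(ℓ+3)/2} if ℓ is odd and ℓ ≥ 3, and h_ℓ = 0 otherwise; t_2 = 1/2, t_ℓ = (1/2)^ℓ for ℓ ≥ 3, and t_ℓ = 0 for ℓ ≤ 1; and p_ℓ = h_ℓ + ∑_{i=2}^{ℓ} t_i * p_{ℓ-i} (a well-founded strong recursion since t_0 = t_1 = 0, with p_0 = 0). Then for every real x with |x| < 1, the series ∑_{ℓ=0}^∞ p_ℓ * x^ℓ converges and equals x^3*(x-2) / ((x^2-2)*(x^3 - 4*x^2 - 4*x + 8)). -/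

import Mathlib

/-- The trapping-length probabilities `p` on the one-sided square ladder, defined by the
convolution recursion `p = t * p + h` with hook probabilities `h` and twist probabilities `t`,
have ordinary generating function `x^3 (x-2)/((x^2-2)(x^3-4x^2-4x+8))` for `|x| < 1`. -/
theorem trapping_length_gf_one_sided_square (h t p : ℕ → ℝ)
    (hh : ∀ ℓ : ℕ, h ℓ = if Odd ℓ ∧ 3 ≤ ℓ then (1 / 2 : ℝ) ^ ((ℓ + 3) / 2) else 0)
    (ht0 : ∀ ℓ ≤ 1, t ℓ = 0)
    (ht2 : t 2 = 1 / 2)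
    (ht3 : ∀ ℓ : ℕ, 3 ≤ ℓ → t ℓ = (1 / 2 : ℝ) ^ ℓ)
    (hp : ∀ ℓ : ℕ, p ℓ = h ℓ + ∑ i ∈ Finset.Icc 2 ℓ, t i * p (ℓ - i))
    (x : ℝ) (hx : |x| < 1) :
    HasSum (fun ℓ : ℕ => p ℓ * x ^ ℓ)
      (x ^ 3 * (x - 2) / ((x ^ 2 - 2) * (x ^ 3 - 4 * x ^ 2 - 4 * x + 8))) := by
  obtain ⟨hxa, hxb⟩ := abs_lt.mp hx
  have hxsq : x ^ 2 < 1 := by nlinarith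
  -- the cubic is positive on (-1,1)
  have hf : (0:ℝ) < x ^ 3 - 4 * x ^ 2 - 4 * x + 8 := by nlinarith [mul_pos (by linarith : (0:ℝ) < 1 - x) (by nlinarith : (0:ℝ) < 7 + 3*x - x^2)]
  -- geometric series
  have hax2 : |x / 2| < 1 := by rw [abs_div, abs_two]; linarith
  have hax22 : |x ^ 2 / 2| < 1 := by
    rw [abs_div, abs_two, abs_of_nonneg (sq_nonneg x)]; linarith
  have hg1 : HasSum (fun n : ℕ => (x / 2) ^ n) (1 - x / 2)⁻¹ :=
    hasSum_geometric_of_abs_lt_one hax2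
  have hg2 : HasSum (fun n : ℕ => (x ^ 2 / 2) ^ n) (1 - x ^ 2 / 2)⁻¹ :=
    hasSum_geometric_of_abs_lt_one hax22
  have hgeo : Summable (fun ℓ : ℕ => |x| ^ ℓ) :=
    summable_geometric_of_lt_one (abs_nonneg x) hx
  -- nonnegativity and bounds on t
  have ht_nn : ∀ i, 0 ≤ t i := by
    intro i
    match i with
    | 0 => rw [ht0 0 (by norm_num)]
    | 1 => rw [ht0 1 le_rfl]
    | 2 => rw [ht2]; norm_num
    | (n+3) => rw [ht3 _ (by omega)]; positivity
  have htb : ∀ i, |t i| ≤ 1 := by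
    intro i
    rw [abs_of_nonneg (ht_nn i)]
    match i with
    | 0 => rw [ht0 0 (by norm_num)]; norm_num
    | 1 => rw [ht0 1 le_rfl]; norm_num
    | 2 => rw [ht2]; norm_num
    | (n+3) => rw [ht3 _ (by omega)]; exact pow_le_one₀ (by norm_num) (by norm_num)
  -- partial sums of t
  have hSeq : ∀ ℓ, 2 ≤ ℓ → (∑ i ∈ Finset.Icc 2 ℓ, t i) = 3/4 - (1/2:ℝ)^ℓ := by
    intro ℓ hℓ
    induction ℓ, hℓ using Nat.le_induction with
    | base => rw [Finset.Icc_self, Finset.sum_singleton, ht2]; norm_num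
    | succ n hn ih =>
      rw [Finset.sum_Icc_succ_top (by omega : 2 ≤ n + 1), ih, ht3 (n+1) (by omega)]
      ring
  have hStb : ∀ ℓ, (∑ i ∈ Finset.Icc 2 ℓ, t i) ≤ 3/4 := by
    intro ℓ
    rcases le_or_gt 2 ℓ with h2 | h2
    · rw [hSeq ℓ h2]
      have : (0:ℝ) < (1/2)^ℓ := by positivity
      linarith
    · rw [Finset.Icc_eq_empty (by omega), Finset.sum_empty]; norm_num
  -- bound on h
  have hhb : ∀ ℓ, |h ℓ| ≤ 1/4 := by
    intro ℓ
    rw [hh]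
    split
    · next hc =>
      rw [abs_of_nonneg (by positivity)]
      have h32 : 2 ≤ (ℓ + 3) / 2 := by omega
      calc (1/2:ℝ) ^ ((ℓ + 3) / 2) ≤ (1/2:ℝ) ^ 2 :=
            pow_le_pow_of_le_one (by norm_num) (by norm_num) h32
        _ = 1/4 := by norm_num
    · simp
  -- bound on p
  have hpb : ∀ ℓ, |p ℓ| ≤ 1 := by
    intro ℓ
    induction ℓ using Nat.strong_induction_on with
    | _ ℓ ih =>
      have hb : |∑ i ∈ Finset.Icc 2 ℓ, t i * p (ℓ - i)| ≤ ∑ i ∈ Finset.Icc 2 ℓ, t i := by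
        calc |∑ i ∈ Finset.Icc 2 ℓ, t i * p (ℓ - i)|
            ≤ ∑ i ∈ Finset.Icc 2 ℓ, |t i * p (ℓ - i)| :=
              Finset.abs_sum_le_sum_abs _ _
          _ ≤ ∑ i ∈ Finset.Icc 2 ℓ, t i := by
              apply Finset.sum_le_sum
              intro i hi
              obtain ⟨hi2, hiℓ⟩ := Finset.mem_Icc.mp hi
              have hlt : ℓ - i < ℓ := by omega
              have := ih (ℓ - i) hlt
              rw [abs_mul, abs_of_nonneg (ht_nn i)]
              nlinarith [ht_nn i, abs_nonneg (p (ℓ - i))]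
      rw [hp ℓ]
      calc |h ℓ + ∑ i ∈ Finset.Icc 2 ℓ, t i * p (ℓ - i)|
          ≤ |h ℓ| + |∑ i ∈ Finset.Icc 2 ℓ, t i * p (ℓ - i)| := abs_add_le _ _
        _ ≤ 1 := by linarith [hhb ℓ, hStb ℓ]
  -- summability of the three series
  have St : Summable (fun ℓ : ℕ => ‖t ℓ * x ^ ℓ‖) := by
    apply Summable.of_nonneg_of_le (fun _ => norm_nonneg _) _ hgeo
    intro ℓ
    rw [Real.norm_eq_abs, abs_mul, abs_pow]
    have h0 : (0:ℝ) ≤ |x| ^ ℓ := by positivity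
    nlinarith [htb ℓ, abs_nonneg (t ℓ)]
  have Sp : Summable (fun ℓ : ℕ => ‖p ℓ * x ^ ℓ‖) := by
    apply Summable.of_nonneg_of_le (fun _ => norm_nonneg _) _ hgeo
    intro ℓ
    rw [Real.norm_eq_abs, abs_mul, abs_pow]
    have h0 : (0:ℝ) ≤ |x| ^ ℓ := by positivity
    nlinarith [hpb ℓ, abs_nonneg (p ℓ)]
  -- sum of the t-series
  set Tv : ℝ := (1 - x / 2)⁻¹ + (-1 + -(x/2) + x^2/4) with hTv
  have hT : HasSum (fun ℓ : ℕ => t ℓ * x ^ ℓ) Tv := by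
    have key : (fun ℓ : ℕ => t ℓ * x ^ ℓ)
        = fun ℓ : ℕ => (x/2) ^ ℓ + ((if ℓ = 0 then (-1:ℝ) else 0)
            + (if ℓ = 1 then -(x/2) else 0) + (if ℓ = 2 then x^2/4 else 0)) := by
      funext ℓ
      match ℓ with
      | 0 => simp [ht0 0 (by norm_num)]
      | 1 => simp [ht0 1 le_rfl]
      | 2 => simp [ht2]; ring
      | (n+3) =>
        rw [ht3 _ (by omega)]
        simp only [Nat.add_eq, if_neg (by omega : ¬ n + 3 = 0),
          if_neg (by omega : ¬ n + 3 = 1), if_neg (by omega : ¬ n + 3 = 2)]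
        rw [div_pow, one_pow, div_pow]
        ring
    rw [key]
    exact hg1.add (((hasSum_ite_eq 0 (-1:ℝ)).add (hasSum_ite_eq 1 (-(x/2)))).add
      (hasSum_ite_eq 2 (x^2/4)))
  -- sum of the h-series
  set Hv : ℝ := x^3/8 * (1 - x^2/2)⁻¹ with hHv
  have hH : HasSum (fun ℓ : ℕ => h ℓ * x ^ ℓ) Hv := by
    have hinj : Function.Injective (fun k : ℕ => 2*k+3) := by
      intro a b hab
      simp only at hab
      omega
    have hr : ∀ ℓ : ℕ, ℓ ∉ Set.range (fun k : ℕ => 2*k+3) → h ℓ * x ^ ℓ = 0 := by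
      intro ℓ hℓ
      rw [hh, if_neg, zero_mul]
      rintro ⟨⟨k, hk⟩, h3⟩
      exact hℓ ⟨k - 1, by show 2 * (k - 1) + 3 = ℓ; omega⟩
    rw [← Function.Injective.hasSum_iff hinj hr]
    have hmain := hg2.mul_left (x^3/8)
    convert hmain using 1
    · rfl
    funext k
    simp only [Function.comp_apply, hh]
    rw [if_pos ⟨⟨k+1, by ring⟩, by omega⟩,
      (by omega : (2*k+3+3)/2 = k + 3)]
    have hxp : x ^ (2*k+3) = (x^2)^k * x^3 := by rw [pow_add, pow_mul]
    rw [hxp, div_pow, one_pow, div_pow]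
    ring
  -- the p-series sum
  have hPsum : HasSum (fun ℓ : ℕ => p ℓ * x ^ ℓ) (∑' ℓ, p ℓ * x ^ ℓ) :=
    Sp.of_norm.hasSum
  set P : ℝ := ∑' ℓ, p ℓ * x ^ ℓ with hPdef
  -- Cauchy product
  have hC := hasSum_sum_range_mul_of_summable_norm St Sp
  rw [hT.tsum_eq, ← hPdef] at hC
  -- pointwise recursion
  have hkey : ∀ n : ℕ, p n * x ^ n = h n * x ^ n
      + ∑ k ∈ Finset.range (n+1), (t k * x ^ k) * (p (n-k) * x ^ (n-k)) := by
    intro n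
    have hsub : Finset.Icc 2 n ⊆ Finset.range (n+1) := by
      intro k hk
      obtain ⟨h1, h2⟩ := Finset.mem_Icc.mp hk
      exact Finset.mem_range.mpr (by omega)
    have hz : ∀ k ∈ Finset.range (n+1), k ∉ Finset.Icc 2 n →
        t k * x ^ k * (p (n-k) * x ^ (n-k)) = 0 := by
      intro k hk1 hk2
      have hk1' := Finset.mem_range.mp hk1
      have hk : k ≤ 1 := by
        by_contra hcon
        exact hk2 (Finset.mem_Icc.mpr (by omega))
      rw [ht0 k hk, zero_mul, zero_mul]
    have e1 : ∑ k ∈ Finset.range (n+1), (t k * x ^ k) * (p (n-k) * x ^ (n-k))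
        = ∑ k ∈ Finset.Icc 2 n, t k * p (n-k) * x ^ n := by
      rw [← Finset.sum_subset hsub hz]
      apply Finset.sum_congr rfl
      intro k hk
      obtain ⟨hk2, hkn⟩ := Finset.mem_Icc.mp hk
      have hxx : x ^ k * x ^ (n - k) = x ^ n := by
        rw [← pow_add]
        congr 1
        omega
      calc (t k * x ^ k) * (p (n-k) * x ^ (n-k))
          = t k * p (n-k) * (x ^ k * x ^ (n-k)) := by ring
        _ = t k * p (n-k) * x ^ n := by rw [hxx]
    rw [hp n, e1, ← Finset.sum_mul]
    ring
  have hTotal : HasSum (fun n : ℕ => p n * x ^ n) (Hv + Tv * P) := by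
    have := hH.add hC
    rwa [show (fun n : ℕ => h n * x ^ n
        + ∑ k ∈ Finset.range (n+1), (t k * x ^ k) * (p (n-k) * x ^ (n-k)))
        = fun n : ℕ => p n * x ^ n from funext fun n => (hkey n).symm] at this
  have hPeq : P = Hv + Tv * P := hPsum.unique hTotal
  -- nonvanishing denominators
  have h2x : (0:ℝ) < 2 - x := by linarith
  have h1x2 : (0:ℝ) < 1 - x / 2 := by linarith
  have h1xx : (0:ℝ) < 1 - x ^ 2 / 2 := by nlinarith
  have hx2m : x ^ 2 - 2 ≠ 0 := by nlinarith
  have hfact : 1 - Tv = (x ^ 3 - 4 * x ^ 2 - 4 * x + 8) / (4 * (2 - x)) := by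
    rw [hTv, inv_eq_one_div]
    field_simp
    ring
  have hTvne : 1 - Tv ≠ 0 := by
    rw [hfact]
    exact div_ne_zero (ne_of_gt hf) (by positivity)
  -- solve for P
  have hPval : P = Hv / (1 - Tv) := by
    rw [eq_div_iff hTvne]
    linear_combination hPeq
  have h2x2 : (0:ℝ) < 2 - x ^ 2 := by nlinarith
  have hHv2 : Hv = x ^ 3 / (4 * (2 - x ^ 2)) := by
    rw [hHv, eq_div_iff (by nlinarith : (0:ℝ) < 4 * (2 - x ^ 2)).ne', inv_eq_one_div]
    field_simp [h1xx.ne']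
    ring
  have hG : x ^ 3 * (x - 2) / ((x ^ 2 - 2) * (x ^ 3 - 4 * x ^ 2 - 4 * x + 8)) = P := by
    rw [hPval, hfact, hHv2, div_div_eq_mul_div, div_mul_eq_mul_div, div_div,
      div_eq_div_iff (mul_ne_zero hx2m hf.ne') (mul_ne_zero (by positivity) hf.ne')]
    ring
  rw [hG]
  exact hPsum
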